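/- (Mackey irreducibility criterion for difference modules) Let C = {f ∈ F : φ(f) = f} be algebraically closed of characteristic 0, and let N be an irreducible D_t-module, finite-dimensional over F. Then the induced D-module N↑^1_t = D ⊗_{D_t} N is irreducible if and only if for each i = 1, ..., t−1 the twisted module Φ^i ⊗ N is not isomorphic to N as a D_t-module. -/

import Mathlib

/-- The fixed field `C = {f ∈ F : φ(f) = f}` of a field automorphism `φ`. -/
def fixedSubfield {F : Type*} [Field F] (φ : F ≃+* F) : Subfield F where
  carrier := {f | φ f = f}
  mul_mem' := by intro a b ha hb; simp only [Set.mem_setOf_eq] at *; rw [map_mul, ha, hb]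
  one_mem' := by simp [Set.mem_setOf_eq]
  add_mem' := by intro a b ha hb; simp only [Set.mem_setOf_eq] at *; rw [map_add, ha, hb]
  zero_mem' := by simp [Set.mem_setOf_eq]
  neg_mem' := by intro a ha; simp only [Set.mem_setOf_eq] at *; rw [map_neg, ha]
  inv_mem' := by intro a ha; simp only [Set.mem_setOf_eq] at *; rw [map_inv₀, ha]

/-- A subspace `p` is stable under the (semilinear) action `g`. -/
def DiffStab {F V : Type*} [Field F] [AddCommGroup V] [Module F V]
    (g : V → V) (p : Submodule F V) : Prop :=
  ∀ x ∈ p, g x ∈ p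

/-- `(V, A)` realizes the induced module `D ⊗_{D_t} (W, Ψ)` (`k = t`). -/
def IsInducedTw {F W V : Type*} [Field F] [AddCommGroup W] [Module F W]
    [AddCommGroup V] [Module F V]
    (τ : F → F) (A : V → V) (k : ℕ) (Ψ : W → W) : Prop :=
  ∃ j : W →+ V,
    (∀ (f : F) (w : W), j (f • w) = τ f • j w) ∧
    (∀ w : W, A^[k] (j w) = j (Ψ w)) ∧
    (∀ v : V, ∃! c : Fin k → W, v = ∑ i : Fin k, A^[(i : ℕ)] (j (c i)))

/-- Mackey irreducibility criterion for difference modules.  Let the fixed field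
`C` of `φ` be algebraically closed of characteristic `0`, and let `N = (W, Ψ)` be
an irreducible `D_t`-module, finite-dimensional over `F`.  Let `(V, A)` be the
induced `D`-module `N↑^1_t = D ⊗_{D_t} N`.  Then `N↑^1_t` is irreducible if and
only if for each `i = 1, …, t-1` the twisted module `Φ^i ⊗ N` is not isomorphic to
`N` as a `D_t`-module, i.e. there is no additive bijection `e : W ≃ W` which is
`φ^i`-semilinear and commutes with `Ψ`. -/
theorem mackey_irreducibility_criterion {F W V : Type*} [Field F] [CharZero F]
    (φ : F ≃+* F) [IsAlgClosed (fixedSubfield φ)]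
    [AddCommGroup W] [Module F W] [FiniteDimensional F W]
    [AddCommGroup V] [Module F V] [FiniteDimensional F V]
    (t : ℕ) (ht : 0 < t)
    (Ψ : W ≃+ W) (hΨ : ∀ (f : F) (w : W), Ψ (f • w) = (⇑φ)^[t] f • Ψ w)
    (hntW : Nontrivial W)
    (hirrW : ∀ p : Submodule F W, DiffStab ⇑Ψ p → p = ⊥ ∨ p = ⊤)
    (A : V ≃+ V) (hA : ∀ (f : F) (v : V), A (f • v) = φ f • A v)
    (hInd : IsInducedTw (id : F → F) ⇑A t ⇑Ψ) :
    (Nontrivial V ∧ ∀ p : Submodule F V, DiffStab ⇑A p → p = ⊥ ∨ p = ⊤) ↔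
      ∀ i : ℕ, 1 ≤ i → i < t →
        ¬ ∃ e : W ≃+ W,
            (∀ (f : F) (w : W), e (f • w) = (⇑φ)^[i] f • e w) ∧
            (∀ w : W, e (Ψ w) = Ψ (e w)) := by
  classical
  obtain ⟨j, hjF, hjΨ, hj3⟩ := hInd
  simp only [id_eq] at hjF
  -- iterate basics
  have hAadd : ∀ (n : ℕ) (x y : V), (⇑A)^[n] (x + y) = (⇑A)^[n] x + (⇑A)^[n] y := by
    intro n
    induction n with
    | zero => simp
    | succ n ih =>
      intro x y
      simp only [Function.iterate_succ_apply', ih, map_add]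
  have hA0 : ∀ n : ℕ, (⇑A)^[n] (0 : V) = 0 := by
    intro n
    induction n with
    | zero => simp
    | succ n ih => simp [Function.iterate_succ_apply', ih]
  have hAsmul : ∀ (n : ℕ) (f : F) (x : V), (⇑A)^[n] (f • x) = (⇑φ)^[n] f • (⇑A)^[n] x := by
    intro n
    induction n with
    | zero => simp
    | succ n ih =>
      intro f x
      simp only [Function.iterate_succ_apply', ih, hA]
  have hAsum : ∀ (n : ℕ) (s : Finset (Fin t)) (g : Fin t → V),
      (⇑A)^[n] (∑ m ∈ s, g m) = ∑ m ∈ s, (⇑A)^[n] (g m) := by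
    intro n s g
    exact map_sum (AddMonoidHom.mk' ((⇑A)^[n]) (hAadd n)) g s
  have hφrl : ∀ (n : ℕ) (f : F), (⇑φ.symm)^[n] ((⇑φ)^[n] f) = f := by
    intro n
    exact Function.LeftInverse.iterate φ.symm_apply_apply n
  have hφlr : ∀ (n : ℕ) (f : F), (⇑φ)^[n] ((⇑φ.symm)^[n] f) = f := by
    intro n
    exact Function.LeftInverse.iterate φ.apply_symm_apply n
  -- coordinates
  choose coord hspec huniq using hj3
  have hcoord_rep : ∀ c : Fin t → W, coord (∑ i : Fin t, (⇑A)^[(i : ℕ)] (j (c i))) = c :=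
    fun c => (huniq _ c rfl).symm
  have coord_zero : coord (0 : V) = 0 := by
    have h0 : (0 : V) = ∑ i : Fin t, (⇑A)^[(i : ℕ)] (j ((0 : Fin t → W) i)) := by
      simp [hA0]
    exact (huniq 0 0 h0).symm
  have coord_add : ∀ v v' : V, coord (v + v') = coord v + coord v' := by
    intro v v'
    refine (huniq (v + v') _ ?_).symm
    calc v + v' = (∑ i : Fin t, (⇑A)^[(i : ℕ)] (j (coord v i)))
          + ∑ i : Fin t, (⇑A)^[(i : ℕ)] (j (coord v' i)) := by rw [← hspec, ← hspec]
      _ = ∑ i : Fin t, (⇑A)^[(i : ℕ)] (j ((coord v + coord v') i)) := by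
          rw [← Finset.sum_add_distrib]
          refine Finset.sum_congr rfl fun i _ => ?_
          rw [← hAadd, ← map_add]
          rfl
  have coord_sub : ∀ v v' : V, coord (v - v') = coord v - coord v' := by
    intro v v'
    have h := coord_add (v - v') v'
    rw [sub_add_cancel] at h
    rw [eq_sub_iff_add_eq, ← h]
  have coord_smul : ∀ (f : F) (v : V),
      coord (f • v) = fun m : Fin t => (⇑φ.symm)^[(m : ℕ)] f • coord v m := by
    intro f v
    refine (huniq (f • v) _ ?_).symm
    calc f • v = f • ∑ i : Fin t, (⇑A)^[(i : ℕ)] (j (coord v i)) := by rw [← hspec]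
      _ = ∑ i : Fin t, (⇑A)^[(i : ℕ)] (j ((⇑φ.symm)^[(i : ℕ)] f • coord v i)) := by
          rw [Finset.smul_sum]
          refine Finset.sum_congr rfl fun i _ => ?_
          rw [hjF, hAsmul, hφlr]
  have rep_single : ∀ (k : Fin t) (w : W),
      (∑ i : Fin t, (⇑A)^[(i : ℕ)] (j ((Pi.single k w : Fin t → W) i))) = (⇑A)^[(k : ℕ)] (j w) := by
    intro k w
    rw [Finset.sum_eq_single k]
    · rw [Pi.single_eq_same]
    · intro i _ hik
      rw [Pi.single_eq_of_ne hik, map_zero, hA0]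
    · intro hk; exact absurd (Finset.mem_univ k) hk
  have coord_single : ∀ (k : Fin t) (w : W),
      coord ((⇑A)^[(k : ℕ)] (j w)) = (Pi.single k w : Fin t → W) := by
    intro k w
    rw [← rep_single k w, hcoord_rep]
  have hj0 : ∀ w : W, j w = 0 → w = 0 := by
    intro w hw
    have h1 : coord ((⇑A)^[((⟨0, ht⟩ : Fin t) : ℕ)] (j w)) = Pi.single (⟨0, ht⟩ : Fin t) w :=
      coord_single _ w
    simp only [Function.iterate_zero_apply, hw, coord_zero] at h1
    have := congrFun h1 ⟨0, ht⟩
    rwa [Pi.single_eq_same, Pi.zero_apply, eq_comm] at this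
  have coord_At : ∀ v : V, coord ((⇑A)^[t] v) = fun m : Fin t => Ψ (coord v m) := by
    intro v
    refine (huniq _ _ ?_).symm
    calc (⇑A)^[t] v = (⇑A)^[t] (∑ i : Fin t, (⇑A)^[(i : ℕ)] (j (coord v i))) := by rw [← hspec]
      _ = ∑ i : Fin t, (⇑A)^[(i : ℕ)] (j (Ψ (coord v i))) := by
          rw [hAsum]
          refine Finset.sum_congr rfl fun i _ => ?_
          rw [← hjΨ, ← Function.iterate_add_apply, ← Function.iterate_add_apply,
            Nat.add_comm]
  have coord_sub : ∀ v v' : V, coord (v - v') = coord v - coord v' := by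
    intro v v'
    have h := coord_add (v - v') v'
    rw [sub_add_cancel] at h
    rw [eq_sub_iff_add_eq, ← h]
  constructor
  · rintro ⟨hntV, hirrV⟩ i hi1 hi2 ⟨e, he1, he2⟩
    have hesymm_smul : ∀ (f : F) (w : W), e.symm (f • w) = (⇑φ.symm)^[i] f • e.symm w := by
      intro f w
      apply e.injective
      rw [e.apply_symm_apply, he1, hφlr, e.apply_symm_apply]
    have hesymm_comm : ∀ w : W, e.symm (Ψ w) = Ψ (e.symm w) := by
      intro w
      apply e.injective
      rw [e.apply_symm_apply, he2, e.apply_symm_apply]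
    set β : W → V := fun w => (⇑A)^[i] (j (e.symm w)) with hβ
    have hβ0 : β 0 = 0 := by simp [hβ, hA0]
    have hβadd : ∀ w w', β (w + w') = β w + β w' := by
      intro w w'; simp [hβ, map_add, hAadd]
    have hβsmul : ∀ (f : F) (w : W), β (f • w) = f • β w := by
      intro f w
      simp only [hβ, hesymm_smul, hjF, hAsmul, hφlr]
    have hβΨ : ∀ w : W, β (Ψ w) = (⇑A)^[t] (β w) := by
      intro w
      simp only [hβ, hesymm_comm, ← hjΨ]
      rw [← Function.iterate_add_apply, ← Function.iterate_add_apply, Nat.add_comm]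
    set B : V →ₗ[F] V :=
      { toFun := fun v => ∑ m : Fin t, (⇑A)^[(m : ℕ)] (β (coord v m))
        map_add' := by
          intro v v'
          rw [coord_add, ← Finset.sum_add_distrib]
          exact Finset.sum_congr rfl fun m _ => by rw [Pi.add_apply, hβadd, hAadd]
        map_smul' := by
          intro f v
          rw [coord_smul, RingHom.id_apply, Finset.smul_sum]
          exact Finset.sum_congr rfl fun m _ => by rw [hβsmul, hAsmul, hφlr] } with hBdef
    have hB : ∀ v : V, B v = ∑ m : Fin t, (⇑A)^[(m : ℕ)] (β (coord v m)) := fun v => rfl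
    have hAq : ∀ (q : ℕ) (w : W), (⇑A)^[t * q] (j w) = j ((⇑Ψ)^[q] w) := by
      intro q
      induction q with
      | zero => simp
      | succ q ih =>
        intro w
        rw [Nat.mul_succ, Function.iterate_add_apply, hjΨ, ih,
          ← Function.iterate_succ_apply]
    have hβq : ∀ (q : ℕ) (w : W), β ((⇑Ψ)^[q] w) = (⇑A)^[t * q] (β w) := by
      intro q
      induction q with
      | zero => simp
      | succ q ih =>
        intro w
        rw [Function.iterate_succ_apply, ih, hβΨ, ← Function.iterate_add_apply, Nat.mul_succ,
          Nat.add_comm]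
    have B_rep : ∀ (m : ℕ) (w : W), B ((⇑A)^[m] (j w)) = (⇑A)^[m] (β w) := by
      intro m w
      have hm : m % t + t * (m / t) = m := Nat.mod_add_div m t
      have hrt : m % t < t := Nat.mod_lt _ ht
      have h1 : (⇑A)^[m] (j w) = (⇑A)^[m % t] (j ((⇑Ψ)^[m / t] w)) := by
        conv_lhs => rw [← hm]
        rw [Function.iterate_add_apply, hAq]
      rw [h1, hB]
      have h2 : coord ((⇑A)^[m % t] (j ((⇑Ψ)^[m / t] w)))
          = (Pi.single (⟨m % t, hrt⟩ : Fin t) ((⇑Ψ)^[m / t] w) : Fin t → W) :=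
        coord_single ⟨m % t, hrt⟩ _
      rw [h2, Finset.sum_eq_single (⟨m % t, hrt⟩ : Fin t)]
      · rw [Pi.single_eq_same, hβq, ← Function.iterate_add_apply, hm]
      · intro c _ hc
        rw [Pi.single_eq_of_ne hc, hβ0, hA0]
      · intro hc; exact absurd (Finset.mem_univ _) hc
    have BA : ∀ v : V, B (A v) = A (B v) := by
      intro v
      have h1 : A v = ∑ m : Fin t, (⇑A)^[(m : ℕ) + 1] (j (coord v m)) := by
        conv_lhs => rw [hspec v]
        rw [map_sum A]
        exact Finset.sum_congr rfl fun m _ => (Function.iterate_succ_apply' (⇑A) _ _).symm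
      calc B (A v) = ∑ m : Fin t, B ((⇑A)^[(m : ℕ) + 1] (j (coord v m))) := by
            rw [h1, map_sum B]
        _ = A (∑ m : Fin t, (⇑A)^[(m : ℕ)] (β (coord v m))) := by
            rw [map_sum A]
            refine Finset.sum_congr rfl fun m _ => ?_
            rw [B_rep, Function.iterate_succ_apply']
        _ = A (B v) := congrArg A (hB v).symm
    -- matrix part
    set n := Module.finrank F V with hn
    have hnpos : 0 < n := Module.finrank_pos
    set b : Module.Basis (Fin n) F V := Module.finBasis F V with hb
    have hli : LinearIndependent F (fun k : Fin n => A (b k)) := by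
      rw [Fintype.linearIndependent_iff]
      intro g hg
      have h1 : A (∑ k, φ.symm (g k) • b k) = 0 := by
        rw [map_sum A]
        calc (∑ k, A (φ.symm (g k) • b k)) = ∑ k, g k • A (b k) := by
              exact Finset.sum_congr rfl fun k _ => by rw [hA, φ.apply_symm_apply]
          _ = 0 := hg
      have h2 : (∑ k, φ.symm (g k) • b k) = 0 := by
        apply A.injective; rw [h1, map_zero]
      intro k
      have h3 := (Fintype.linearIndependent_iff.mp b.linearIndependent) _ h2 k
      have := congrArg φ h3
      rwa [φ.apply_symm_apply, map_zero] at this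
    have hsp : ⊤ ≤ Submodule.span F (Set.range fun k : Fin n => A (b k)) := by
      intro v _
      have h1 : v = A (∑ k, b.repr (A.symm v) k • b k) := by
        rw [b.sum_repr, A.apply_symm_apply]
      rw [h1, map_sum A]
      refine Submodule.sum_mem _ fun k _ => ?_
      rw [hA]
      exact Submodule.smul_mem _ _ (Submodule.subset_span ⟨k, rfl⟩)
    set b' : Module.Basis (Fin n) F V := Module.Basis.mk hli hsp with hb'
    set M : Matrix (Fin n) (Fin n) F := LinearMap.toMatrix b b B with hM
    have hmat : LinearMap.toMatrix b' b' B = M.map ⇑φ := by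
      ext m k
      rw [LinearMap.toMatrix_apply, Matrix.map_apply, hM, LinearMap.toMatrix_apply, Module.Basis.mk_apply]
      have hBbk : B (A (b k)) = ∑ m', φ (b.repr (B (b k)) m') • b' m' := by
        rw [BA]
        conv_lhs => rw [← b.sum_repr (B (b k))]
        rw [map_sum A]
        refine Finset.sum_congr rfl fun m' _ => ?_
        rw [hA, hb', Module.Basis.mk_apply]
      rw [hBbk]
      exact congrFun (b'.repr_sum_self _) m
    have hcm : M.charpoly.map (φ : F →+* F) = M.charpoly := by
      have h1 : (M.map ⇑(φ : F →+* F)).charpoly = M.charpoly.map (φ : F →+* F) :=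
        Matrix.charpoly_map M (φ : F →+* F)
      have h2 : M.map ⇑(φ : F →+* F) = M.map ⇑φ := rfl
      rw [h2, ← hmat] at h1
      rw [← h1, LinearMap.charpoly_toMatrix, ← LinearMap.charpoly_toMatrix B b]
    have hcoef : ∀ k : ℕ, φ (M.charpoly.coeff k) = M.charpoly.coeff k := by
      intro k
      conv_rhs => rw [← hcm]
      rw [Polynomial.coeff_map]
      rfl
    set q : Polynomial (fixedSubfield φ) :=
      ∑ k ∈ M.charpoly.support,
        Polynomial.C (⟨M.charpoly.coeff k, hcoef k⟩ : fixedSubfield φ) * Polynomial.X ^ k with hq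
    have hqmap : q.map (fixedSubfield φ).subtype = M.charpoly := by
      rw [hq, Polynomial.map_sum]
      refine (Finset.sum_congr rfl fun k _ => ?_).trans M.charpoly.as_sum_support.symm
      rw [Polynomial.map_mul, Polynomial.map_C, Polynomial.map_pow, Polynomial.map_X]
      rw [show (fixedSubfield φ).subtype (⟨M.charpoly.coeff k, hcoef k⟩ : fixedSubfield φ)
          = M.charpoly.coeff k from rfl, Polynomial.C_mul_X_pow_eq_monomial]
    have hsubinj : Function.Injective ⇑(fixedSubfield φ).subtype := Subtype.coe_injective
    have hdeg : q.degree = (n : WithBot ℕ) := by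
      have h1 := Polynomial.degree_map_eq_of_injective hsubinj q
      rw [hqmap] at h1
      rw [← h1, Matrix.charpoly_degree_eq_dim, Fintype.card_fin]
    obtain ⟨z, hz⟩ := IsAlgClosed.exists_root q (by
      rw [hdeg]
      exact_mod_cast hnpos.ne')
    set lam : F := (fixedSubfield φ).subtype z with hlam
    have hlfix : φ lam = lam := z.2
    have hroot : Polynomial.eval lam M.charpoly = 0 := by
      rw [← hqmap, hlam, Polynomial.eval_map, Polynomial.eval₂_at_apply, hz, map_zero]
    have hdet : (Matrix.diagonal (fun _ : Fin n => lam) - M).det = 0 := by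
      have h1 := RingHom.map_det (Polynomial.evalRingHom lam) (Matrix.charmatrix M)
      rw [RingHom.mapMatrix_apply] at h1
      have h2 : (Matrix.charmatrix M).map ⇑(Polynomial.evalRingHom lam)
          = Matrix.diagonal (fun _ : Fin n => lam) - M := by
        ext a c
        by_cases hac : a = c
        · subst hac
          simp [Matrix.charmatrix_apply_eq, Matrix.sub_apply]
        · simp [Matrix.charmatrix_apply_ne _ _ _ hac, Matrix.sub_apply,
            Matrix.diagonal_apply_ne _ hac]
      rw [h2] at h1
      rw [← h1]
      simpa [Matrix.charpoly] using hroot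
    obtain ⟨v, hv0, hveq⟩ := (Matrix.exists_mulVec_eq_zero_iff).mpr hdet
    have hMv : M.mulVec v = lam • v := by
      have h1 : (Matrix.diagonal (fun _ : Fin n => lam)).mulVec v - M.mulVec v = 0 := by
        rw [← Matrix.sub_mulVec]; exact hveq
      have h2 : (Matrix.diagonal (fun _ : Fin n => lam)).mulVec v = lam • v := by
        funext a
        rw [Matrix.mulVec_diagonal]
        rfl
      rw [h2] at h1
      exact (sub_eq_zero.mp h1).symm
    set x : V := ∑ k, v k • b k with hx
    have hrepr : ⇑(b.repr x) = v := b.repr_sum_self v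
    have hx0 : x ≠ 0 := by
      intro hxz
      apply hv0
      rw [← hrepr, hxz, map_zero]
      rfl
    have hBx : B x = lam • x := by
      apply b.repr.injective
      apply DFunLike.coe_injective
      show ⇑(b.repr (B x)) = ⇑(b.repr (lam • x))
      have h1 : ⇑(b.repr (B x)) = lam • v := by
        rw [← LinearMap.toMatrix_mulVec_repr b b B x, ← hM, hrepr, hMv]
      have h2 : ⇑(b.repr (lam • x)) = lam • v := by
        rw [map_smul]
        funext a
        rw [Finsupp.smul_apply, hrepr]
        rfl
      rw [h1, h2]
    set pk : Submodule F V := LinearMap.ker (B - lam • LinearMap.id) with hpk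
    have hmem : ∀ y : V, y ∈ pk ↔ B y = lam • y := by
      intro y
      rw [hpk, LinearMap.mem_ker, LinearMap.sub_apply, LinearMap.smul_apply, LinearMap.id_apply,
        sub_eq_zero]
    have hstab : ∀ y ∈ pk, A y ∈ pk := by
      intro y hy
      rw [hmem] at hy ⊢
      rw [BA, hy, hA, hlfix]
    rcases hirrV pk hstab with hbot | htop
    · have hxp : x ∈ pk := (hmem x).mpr hBx
      rw [hbot] at hxp
      exact hx0 ((Submodule.mem_bot F).mp hxp)
    · obtain ⟨w₀, hw₀⟩ := exists_ne (0 : W)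
      have hjw : j w₀ ∈ pk := htop ▸ Submodule.mem_top
      have hBj : B (j w₀) = (⇑A)^[i] (j (e.symm w₀)) := by
        have h1 := B_rep 0 w₀
        simpa using h1
      have hlameq : B (j w₀) = lam • j w₀ := (hmem _).mp hjw
      have hvc : (⇑A)^[((⟨i, hi2⟩ : Fin t) : ℕ)] (j (e.symm w₀))
          = (⇑A)^[((⟨0, ht⟩ : Fin t) : ℕ)] (j (lam • w₀)) := by
        show (⇑A)^[i] (j (e.symm w₀)) = (⇑A)^[0] (j (lam • w₀))
        rw [← hBj, hlameq, Function.iterate_zero_apply, hjF]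
      have hc : (Pi.single (⟨i, hi2⟩ : Fin t) (e.symm w₀) : Fin t → W)
          = (Pi.single (⟨0, ht⟩ : Fin t) (lam • w₀) : Fin t → W) := by
        rw [← coord_single, ← coord_single, hvc]
      have hcc := congrFun hc ⟨i, hi2⟩
      have hne : (⟨i, hi2⟩ : Fin t) ≠ (⟨0, ht⟩ : Fin t) := by
        intro hcontr
        have : i = 0 := congrArg Fin.val hcontr
        omega
      rw [Pi.single_eq_same, Pi.single_eq_of_ne hne] at hcc
      apply hw₀
      have : w₀ = e 0 := by rw [← hcc, e.apply_symm_apply]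
      rw [this, map_zero]

  · intro h
    refine ⟨?_, ?_⟩
    · obtain ⟨w₀, hw₀⟩ := exists_ne (0 : W)
      exact ⟨j w₀, 0, fun hc => hw₀ (hj0 _ hc)⟩
    intro p hstab
    by_cases hp : p = ⊥
    · exact Or.inl hp
    right
    -- stability under iterates
    have hstabn : ∀ (S : Submodule F V), (∀ x ∈ S, A x ∈ S) →
        ∀ (m : ℕ) (x : V), x ∈ S → (⇑A)^[m] x ∈ S := by
      intro S hS m
      induction m with
      | zero => intro x hx; exact hx
      | succ m ih =>
        intro x hx
        rw [Function.iterate_succ_apply']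
        exact hS _ (ih x hx)
    -- the set of dimensions of nonzero A^[t]-stable submodules of p
    set D : Set ℕ := {d | ∃ S : Submodule F V,
        (S ≤ p ∧ (∀ x ∈ S, (⇑A)^[t] x ∈ S) ∧ S ≠ ⊥) ∧ Module.finrank F S = d} with hD
    have hDne : (Module.finrank F p) ∈ D := by
      refine ⟨p, ⟨le_rfl, fun x hx => hstabn p hstab t x hx, hp⟩, rfl⟩
    obtain ⟨S, ⟨hSp, hSt, hSne⟩, hSrank⟩ := Nat.sInf_mem ⟨_, hDne⟩
    have hmin : ∀ S' : Submodule F V, S' ≤ S → (∀ x ∈ S', (⇑A)^[t] x ∈ S') →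
        S' ≠ ⊥ → S' = S := by
      intro S' hle hst hne
      have h1 : Module.finrank F S' ∈ D := ⟨S', ⟨hle.trans hSp, hst, hne⟩, rfl⟩
      have h2 : Module.finrank F S ≤ Module.finrank F S' := hSrank ▸ Nat.sInf_le h1
      exact Submodule.eq_of_le_of_finrank_le hle h2
    -- coordinate submodules of W
    set Q : Fin t → Submodule F W := fun k =>
      { carrier := {w | ∃ v ∈ S, coord v k = w}
        add_mem' := by
          rintro a b ⟨v, hv, rfl⟩ ⟨v', hv', rfl⟩
          exact ⟨v + v', S.add_mem hv hv', by rw [coord_add]; rfl⟩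
        zero_mem' := ⟨0, S.zero_mem, by rw [coord_zero]; rfl⟩
        smul_mem' := by
          rintro c a ⟨v, hv, rfl⟩
          refine ⟨(⇑φ)^[(k : ℕ)] c • v, S.smul_mem _ hv, ?_⟩
          rw [coord_smul]; dsimp only; rw [hφrl] } with hQ
    have hQmem : ∀ (k : Fin t) (w : W), w ∈ Q k ↔ ∃ v ∈ S, coord v k = w := fun k w => Iff.rfl
    have hQstab : ∀ k : Fin t, ∀ w ∈ Q k, Ψ w ∈ Q k := by
      rintro k w ⟨v, hv, rfl⟩
      exact ⟨(⇑A)^[t] v, hSt v hv, by rw [coord_At]⟩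
    -- a nonzero coordinate exists
    obtain ⟨v₀, hv₀S, hv₀⟩ := Submodule.ne_bot_iff S |>.mp hSne
    have hc₀ : coord v₀ ≠ 0 := by
      intro hc
      apply hv₀
      rw [hspec v₀, hc]
      simp [hA0]
    obtain ⟨k₀, hk₀⟩ := Function.ne_iff.mp hc₀
    have hQk₀ : Q k₀ ≠ ⊥ := by
      intro hbot
      apply hk₀
      have : coord v₀ k₀ ∈ Q k₀ := ⟨v₀, hv₀S, rfl⟩
      rw [hbot] at this
      exact (Submodule.mem_bot F).mp this
    -- injectivity of the k-th coordinate on S, for k with Q k ≠ ⊥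
    have hker : ∀ k : Fin t, Q k ≠ ⊥ → ∀ v ∈ S, coord v k = 0 → v = 0 := by
      intro k hQk
      set S' : Submodule F V :=
        { carrier := {v | v ∈ S ∧ coord v k = 0}
          add_mem' := by
            rintro a b ⟨ha, ha'⟩ ⟨hb, hb'⟩
            exact ⟨S.add_mem ha hb, by rw [coord_add, Pi.add_apply, ha', hb', add_zero]⟩
          zero_mem' := ⟨S.zero_mem, by rw [coord_zero]; rfl⟩
          smul_mem' := by
            rintro c a ⟨ha, ha'⟩
            exact ⟨S.smul_mem _ ha, by rw [coord_smul]; dsimp only; rw [ha', smul_zero]⟩ } with hS'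
      have hS'le : S' ≤ S := fun v hv => hv.1
      have hS'st : ∀ x ∈ S', (⇑A)^[t] x ∈ S' := by
        rintro x ⟨hx, hx'⟩
        exact ⟨hSt x hx, by rw [coord_At]; dsimp only; rw [hx', map_zero]⟩
      by_cases hbot : S' = ⊥
      · intro v hv hvk
        have : v ∈ S' := ⟨hv, hvk⟩
        rw [hbot] at this
        exact (Submodule.mem_bot F).mp this
      · exfalso
        have heq : S' = S := hmin S' hS'le hS'st hbot
        apply hQk
        rw [eq_bot_iff]
        rintro w ⟨v, hv, rfl⟩
        rw [← heq] at hv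
        exact (Submodule.mem_bot F).mpr hv.2
    have huniqS : ∀ (k : Fin t), Q k ≠ ⊥ → ∀ v ∈ S, ∀ v' ∈ S,
        coord v k = coord v' k → v = v' := by
      intro k hQk v hv v' hv' hcc
      have h1 : coord (v - v') k = 0 := by
        rw [coord_sub, Pi.sub_apply, hcc, sub_self]
      have h2 := hker k hQk (v - v') (S.sub_mem hv hv') h1
      exact sub_eq_zero.mp h2
    -- case split
    by_cases hsing : ∀ m : Fin t, m ≠ k₀ → Q m = ⊥
    · -- single coordinate case : p = ⊤
      have hQtop : Q k₀ = ⊤ := (hirrW (Q k₀) (hQstab k₀)).resolve_left hQk₀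
      have hMk : ∀ w : W, (⇑A)^[(k₀ : ℕ)] (j w) ∈ p := by
        intro w
        have hw : w ∈ Q k₀ := hQtop ▸ Submodule.mem_top
        obtain ⟨v, hv, hvk⟩ := (hQmem k₀ w).mp hw
        have hcv : coord v = (Pi.single k₀ w : Fin t → W) := by
          funext m
          by_cases hm : m = k₀
          · subst hm; rw [Pi.single_eq_same, hvk]
          · rw [Pi.single_eq_of_ne hm]
            have : coord v m ∈ Q m := ⟨v, hv, rfl⟩
            rw [hsing m hm] at this
            exact (Submodule.mem_bot F).mp this
        have hveq : v = (⇑A)^[(k₀ : ℕ)] (j w) := by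
          rw [hspec v, hcv, Finset.sum_eq_single k₀]
          · rw [Pi.single_eq_same]
          · intro c _ hc
            rw [Pi.single_eq_of_ne hc, map_zero, hA0]
          · intro hc; exact absurd (Finset.mem_univ _) hc
        rw [← hveq]
        exact hSp hv
      have hM0 : ∀ w : W, j w ∈ p := by
        intro w
        have h1 : j w = (⇑A)^[t - (k₀ : ℕ)] ((⇑A)^[(k₀ : ℕ)] (j (Ψ.symm w))) := by
          rw [← Function.iterate_add_apply, Nat.sub_add_cancel (le_of_lt k₀.isLt), hjΨ,
            Ψ.apply_symm_apply]
        rw [h1]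
        exact hstabn p hstab _ _ (hMk (Ψ.symm w))
      rw [eq_top_iff]
      intro v _
      rw [hspec v]
      exact Submodule.sum_mem _ fun m _ => hstabn p hstab _ _ (hM0 (coord v m))
    · -- two distinct coordinates : contradiction
      exfalso
      push_neg at hsing
      obtain ⟨m₀, hm₀ne, hm₀⟩ := hsing
      -- order the two indices
      obtain ⟨k, l, hlk, hQk, hQl⟩ :
          ∃ k l : Fin t, (l : ℕ) < (k : ℕ) ∧ Q k ≠ ⊥ ∧ Q l ≠ ⊥ := by
        rcases lt_or_gt_of_ne (fun hc => hm₀ne (Fin.ext hc) :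
            (m₀ : ℕ) ≠ (k₀ : ℕ)) with h1 | h1
        · exact ⟨k₀, m₀, h1, hQk₀, hm₀⟩
        · exact ⟨m₀, k₀, h1, hm₀, hQk₀⟩
      have hQktop : Q k = ⊤ := (hirrW (Q k) (hQstab k)).resolve_left hQk
      have hQltop : Q l = ⊤ := (hirrW (Q l) (hQstab l)).resolve_left hQl
      -- choose preimages
      have hex : ∀ w : W, ∃ v, v ∈ S ∧ coord v k = w := by
        intro w
        have hw : w ∈ Q k := hQktop ▸ Submodule.mem_top
        exact (hQmem k w).mp hw
      choose σ hσS hσk using hex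
      set e0 : W → W := fun w => coord (σ w) l with he0
      have key : ∀ v ∈ S, e0 (coord v k) = coord v l := by
        intro v hv
        have h1 : σ (coord v k) = v :=
          huniqS k hQk _ (hσS _) v hv (hσk _)
        rw [he0]; dsimp only; rw [h1]
      have he0add : ∀ w w', e0 (w + w') = e0 w + e0 w' := by
        intro w w'
        have h1 : coord (σ w + σ w') k = w + w' := by
          rw [coord_add, Pi.add_apply, hσk, hσk]
        have h2 := key (σ w + σ w') (S.add_mem (hσS w) (hσS w'))
        rw [h1] at h2
        rw [h2, coord_add]
        rfl
      have he0smul : ∀ (f : F) (w : W), e0 (f • w) = (⇑φ)^[(k : ℕ) - (l : ℕ)] f • e0 w := by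
        intro f w
        have h1 : coord ((⇑φ)^[(k : ℕ)] f • σ w) k = f • w := by
          rw [coord_smul]; dsimp only; rw [hφrl, hσk]
        have h2 := key _ (S.smul_mem ((⇑φ)^[(k : ℕ)] f) (hσS w))
        rw [h1] at h2
        rw [h2, coord_smul]
        dsimp only
        congr 1
        have h3 : (⇑φ)^[(k : ℕ)] f = (⇑φ)^[(l : ℕ)] ((⇑φ)^[(k : ℕ) - (l : ℕ)] f) := by
          rw [← Function.iterate_add_apply, Nat.add_sub_cancel' (le_of_lt hlk)]
        rw [h3, hφrl]
      have he0comm : ∀ w : W, e0 (Ψ w) = Ψ (e0 w) := by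
        intro w
        have h1 : coord ((⇑A)^[t] (σ w)) k = Ψ w := by rw [coord_At]; dsimp only; rw [hσk]
        have h2 := key _ (hSt (σ w) (hσS w))
        rw [h1] at h2
        rw [h2, coord_At]
      have he0inj : Function.Injective e0 := by
        intro w w' hww
        have h1 : σ w = σ w' := huniqS l hQl _ (hσS w) _ (hσS w') hww
        rw [← hσk w, ← hσk w', h1]
      have he0surj : Function.Surjective e0 := by
        intro u
        have hu : u ∈ Q l := hQltop ▸ Submodule.mem_top
        obtain ⟨v, hv, hvl⟩ := (hQmem l u).mp hu
        exact ⟨coord v k, by rw [key v hv, hvl]⟩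
      set e : W ≃+ W := AddEquiv.mk' (Equiv.ofBijective e0 ⟨he0inj, he0surj⟩) he0add with he
      apply h ((k : ℕ) - (l : ℕ)) (by omega) (by have := k.isLt; omega)
      exact ⟨e, fun f w => he0smul f w, fun w => he0comm w⟩
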